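/- Fix an integer m ≥ 0. For each K, let X_1,…,X_K be identically distributed unbounded random variables with one common exponentially-dominated tail distribution, and assume X_1,…,X_K are m-dependent. Let M_K be a sequence of integers with 1 ≤ M_K ≤ K, M_K → ∞, and M_K/ln^μ K → 0 for some 0 < μ < 1. Then X_{(K−M_K+1)}/X_{(K)} → 1 in probability as K → ∞. -/

import Mathlib

open MeasureTheory ProbabilityTheory Filter

/-- The cumulative distribution function of a real random variable `X` under `μ`. -/
noncomputable def cdfOf {Ω : Type*} [MeasurableSpace Ω] (μ : Measure Ω) (X : Ω → ℝ) : ℝ → ℝ :=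
  fun x => (μ {ω | X ω ≤ x}).toReal

/-- `orderStat v j` is the `j`-th smallest value (1-indexed) among `v 0, …, v (K-1)`. -/
noncomputable def orderStat {K : ℕ} (v : Fin K → ℝ) (j : ℕ) : ℝ :=
  ((Finset.univ.val.map v).sort (· ≤ ·)).getD (j - 1) 0

/-- A finite family of random variables is `m`-dependent: every subfamily whose indices are
pairwise more than `m` apart is jointly independent. -/
def MDepFam {Ω β : Type*} [MeasurableSpace Ω] [MeasurableSpace β] (μ : Measure Ω) (m : ℕ)
    {K : ℕ} (X : Fin K → Ω → β) : Prop :=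
  ∀ S : Finset (Fin K),
    (∀ i ∈ S, ∀ j ∈ S, i ≠ j → (m : ℤ) < |(i : ℤ) - (j : ℤ)|) →
    iIndepFun (fun i : S => X i.1) μ

/-- `F` has an exponentially-dominated tail with parameters `(α, β, lam, γ)`:
`(1 - F x)/(α x^β e^{-lam x^γ}) → 1` as `x → ∞`. -/
def ExpDomTail (F : ℝ → ℝ) (α β lam γ : ℝ) : Prop :=
  Tendsto (fun x : ℝ => (1 - F x) / (α * x ^ β * Real.exp (-lam * x ^ γ))) atTop (nhds 1)
section AuxStmt8

open Filter

private lemma stmt8_polylog_le_rpow (a b u : ℝ) (ha : 0 < a) (hu : 0 < u) :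
    ∀ᶠ x : ℝ in atTop, (a * Real.log x) ^ b ≤ x ^ u := by
  have hlo := isLittleO_log_rpow_rpow_atTop b hu
  have hc : (0:ℝ) < (a ^ b)⁻¹ := by positivity
  filter_upwards [hlo.def hc, eventually_ge_atTop 1] with x hx hx1
  have hlog : 0 ≤ Real.log x := Real.log_nonneg hx1
  have hxu : 0 ≤ x ^ u := Real.rpow_nonneg (by linarith) u
  rw [Real.mul_rpow ha.le hlog]
  have h1 : Real.log x ^ b ≤ (a ^ b)⁻¹ * x ^ u := by
    rwa [Real.norm_eq_abs, Real.norm_eq_abs, abs_of_nonneg (Real.rpow_nonneg hlog b),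
      abs_of_nonneg hxu] at hx
  calc a ^ b * Real.log x ^ b ≤ a ^ b * ((a ^ b)⁻¹ * x ^ u) := by
        nlinarith [Real.rpow_pos_of_pos ha b, Real.rpow_nonneg hlog b]
    _ = x ^ u := by field_simp

private lemma stmt8_rpow_neg_le_polylog (a b u : ℝ) (ha : 0 < a) (hu : 0 < u) :
    ∀ᶠ x : ℝ in atTop, x ^ (-u) ≤ (a * Real.log x) ^ b := by
  filter_upwards [stmt8_polylog_le_rpow a (-b) u ha hu, eventually_ge_atTop 3] with x hx hx3
  have hlog : 0 < Real.log x := Real.log_pos (by linarith)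
  have hal : 0 < a * Real.log x := by positivity
  have hxp : (0:ℝ) < x := by linarith
  rw [Real.rpow_neg hal.le] at hx
  rw [Real.rpow_neg hxp.le]
  have h1 : 0 < (a * Real.log x) ^ b := Real.rpow_pos_of_pos hal b
  have h2 : 0 < x ^ u := Real.rpow_pos_of_pos hxp u
  exact (inv_le_comm₀ h2 h1).mpr hx

private lemma stmt8_orderStat_length {K : ℕ} (v : Fin K → ℝ) :
    ((Finset.univ.val.map v).sort (· ≤ ·)).length = K := by
  rw [Multiset.length_sort, Multiset.card_map]
  simp

private lemma stmt8_orderStat_exists_eq {K : ℕ} (v : Fin K → ℝ) (j : ℕ) (hjK : j ≤ K)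
    (hj1 : 1 ≤ j) : ∃ k, orderStat v j = v k := by
  have hlen := stmt8_orderStat_length v
  have hlt : j - 1 < ((Finset.univ.val.map v).sort (· ≤ ·)).length := by omega
  rw [orderStat, List.getD_eq_getElem _ _ hlt]
  have hmem : ((Finset.univ.val.map v).sort (· ≤ ·))[j-1] ∈
      ((Finset.univ.val.map v).sort (· ≤ ·)) := List.getElem_mem hlt
  rw [Multiset.mem_sort] at hmem
  obtain ⟨k, _, hk⟩ := Multiset.mem_map.1 hmem
  exact ⟨k, hk.symm⟩

private lemma stmt8_orderStat_mono {K : ℕ} (v : Fin K → ℝ) {i j : ℕ} (hi : 1 ≤ i) (hij : i ≤ j)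
    (hj : j ≤ K) : orderStat v i ≤ orderStat v j := by
  have hlen := stmt8_orderStat_length v
  have hsort := Multiset.pairwise_sort (Finset.univ.val.map v) (· ≤ ·)
  have hlt1 : i - 1 < ((Finset.univ.val.map v).sort (· ≤ ·)).length := by omega
  have hlt2 : j - 1 < ((Finset.univ.val.map v).sort (· ≤ ·)).length := by omega
  rw [orderStat, orderStat, List.getD_eq_getElem _ _ hlt1, List.getD_eq_getElem _ _ hlt2]
  rcases eq_or_lt_of_le (show i - 1 ≤ j - 1 by omega) with h | h
  · simp [h]
  · exact List.pairwise_iff_getElem.1 hsort _ _ hlt1 hlt2 h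

open Classical in
private lemma stmt8_le_card_of_orderStat_le {K : ℕ} (v : Fin K → ℝ) {j : ℕ} {x : ℝ}
    (hj1 : 1 ≤ j) (hjK : j ≤ K) (h : orderStat v j ≤ x) :
    j ≤ (Finset.univ.filter (fun k => v k ≤ x)).card := by
  classical
  set l := (Finset.univ.val.map v).sort (· ≤ ·) with hl
  have hlen : l.length = K := stmt8_orderStat_length v
  have hsort : l.Pairwise (· ≤ ·) := Multiset.pairwise_sort _ _
  have hlt : j - 1 < l.length := by omega
  rw [orderStat, List.getD_eq_getElem _ _ hlt] at h
  have htake : ∀ y ∈ l.take j, y ≤ x := by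
    intro y hy
    obtain ⟨i, hi, rfl⟩ := List.mem_iff_getElem.1 hy
    rw [List.length_take] at hi
    have hij : i < j := lt_of_lt_of_le hi (min_le_left _ _)
    have hilen : i < l.length := lt_of_lt_of_le hi (min_le_right _ _)
    rw [List.getElem_take]
    have : l[i] ≤ l[j-1] := by
      rcases eq_or_lt_of_le (show i ≤ j - 1 by omega) with he | hlt'
      · simp [he]
      · exact List.pairwise_iff_getElem.1 hsort _ _ hilen hlt hlt'
    exact this.trans h
  have hjlen : (l.take j).length = j := by simp [List.length_take]; omega
  have hcount_take : (l.take j).countP (fun y => decide (y ≤ x)) = j := by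
    rw [List.countP_eq_length.2 (fun a ha => by simpa using htake a ha), hjlen]
  have hcount : j ≤ l.countP (fun y => decide (y ≤ x)) := by
    conv_rhs => rw [← List.take_append_drop j l]
    rw [List.countP_append, hcount_take]
    omega
  have h2 : (Finset.univ.filter (fun k => v k ≤ x)).card
      = l.countP (fun y => decide (y ≤ x)) := by
    rw [← Multiset.coe_countP, Multiset.sort_eq, Multiset.countP_map]
    simp [Finset.card, Finset.filter_val, Multiset.countP_eq_card_filter]
  omega

private lemma stmt8_natDiv_real_lb (a b : ℕ) (hb : 0 < b) :
    (a:ℝ)/(b:ℝ) - 1 ≤ ((a/b : ℕ):ℝ) := by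
  have h := Nat.lt_div_mul_add (a := a) hb
  have h' : (a:ℝ) < (a/b : ℕ) * b + b := by exact_mod_cast h
  have hb' : (0:ℝ) < b := by exact_mod_cast hb
  rw [div_sub_one hb'.ne', div_le_iff₀ hb']
  nlinarith

private lemma stmt8_block_inj {q b b' i i' : ℕ} (hi : i < q) (hi' : i' < q)
    (h : b*q+i = b'*q+i') : b = b' ∧ i = i' := by
  rcases lt_trichotomy b b' with hlt | he | hlt
  · have : (b+1)*q ≤ b'*q := Nat.mul_le_mul_right q hlt
    nlinarith
  · constructor
    · exact he
    · subst he; omega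
  · have : (b'+1)*q ≤ b*q := Nat.mul_le_mul_right q hlt
    nlinarith

private lemma stmt8_tendsto_B (c d : ℝ) (hc : 0 < c) (hd : 0 < d) :
    Tendsto (fun K : ℕ => (K:ℝ) ^ (-c) + (K:ℝ) * Real.exp (-(K:ℝ) ^ d)) atTop (nhds 0) := by
  have hnat : Tendsto (fun K : ℕ => (K:ℝ)) atTop atTop := tendsto_natCast_atTop_atTop
  have h1 : Tendsto (fun K : ℕ => (K:ℝ) ^ (-c)) atTop (nhds 0) :=
    (tendsto_rpow_neg_atTop hc).comp hnat
  have h2 : Tendsto (fun x : ℝ => x * Real.exp (-x ^ d)) atTop (nhds 0) := by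
    have hlog : Tendsto (fun x : ℝ => Real.log x - x ^ d) atTop atBot := by
      have hev : ∀ᶠ x : ℝ in atTop, Real.log x - x ^ d ≤ -(1/2) * x ^ d := by
        have := (isLittleO_log_rpow_atTop hd).def (by norm_num : (0:ℝ) < 1/2)
        filter_upwards [this, eventually_ge_atTop 1] with x hx hx1
        have h0 : (0:ℝ) ≤ x ^ d := Real.rpow_nonneg (by linarith) d
        rw [Real.norm_eq_abs, Real.norm_eq_abs, abs_of_nonneg (Real.log_nonneg hx1),
          abs_of_nonneg h0] at hx
        linarith
      have htop : Tendsto (fun x : ℝ => -(1/2) * x ^ d) atTop atBot := by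
        have h3 : Tendsto (fun x : ℝ => (1/2) * x ^ d) atTop atTop :=
          (tendsto_rpow_atTop hd).const_mul_atTop (by norm_num)
        exact (tendsto_neg_atTop_atBot.comp h3).congr (fun x => by simp [Function.comp])
      exact tendsto_atBot_mono' atTop hev htop
    have h4 : Tendsto (fun x : ℝ => Real.exp (Real.log x - x ^ d)) atTop (nhds 0) :=
      Real.tendsto_exp_atBot.comp hlog
    apply h4.congr'
    filter_upwards [eventually_gt_atTop 0] with x hx
    rw [Real.exp_sub, Real.exp_log hx, div_eq_mul_inv, ← Real.exp_neg]
  have h5 := (h1.add (h2.comp hnat))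
  simpa using h5

private lemma stmt8_tail_bounds {F : ℝ → ℝ} {α β lam γ η : ℝ}
    (hα : 0 < α) (hlam : 0 < lam) (hγ : 0 < γ)
    (htail : Tendsto (fun x : ℝ => (1 - F x) / (α * x ^ β * Real.exp (-lam * x ^ γ)))
      atTop (nhds 1))
    (hη0 : 0 < η) (hη1 : η < 1) :
    (∀ᶠ K : ℕ in atTop, 1 - F (((1+η) * Real.log K / lam) ^ (γ⁻¹:ℝ)) ≤ (K:ℝ) ^ (-(1+η/2))) ∧
    (∀ᶠ K : ℕ in atTop, (K:ℝ) ^ (η/2 - 1) ≤ 1 - F (((1-η) * Real.log K / lam) ^ (γ⁻¹:ℝ))) := by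
  have hKR : Tendsto (fun K : ℕ => (K:ℝ)) atTop atTop := tendsto_natCast_atTop_atTop
  have hlogK : Tendsto (fun K : ℕ => Real.log K) atTop atTop :=
    Real.tendsto_log_atTop.comp hKR
  have hratio : ∀ᶠ x : ℝ in atTop,
      (1 - F x) ≤ 2*(α * x^β * Real.exp (-lam*x^γ)) ∧
      (1/2)*(α * x^β * Real.exp (-lam*x^γ)) ≤ 1 - F x := by
    have h1 := htail (Ioo_mem_nhds (show (1:ℝ)/2 < 1 by norm_num) (show (1:ℝ) < 2 by norm_num))
    filter_upwards [h1, eventually_gt_atTop 0] with x hx hx0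
    have hD : 0 < α * x^β * Real.exp (-lam*x^γ) := by positivity
    simp only [Set.mem_preimage, Set.mem_Ioo] at hx
    constructor
    · have h2 := hx.2; rw [div_lt_iff₀ hD] at h2; linarith
    · have h2 := hx.1; rw [lt_div_iff₀ hD] at h2; linarith
  have main : ∀ c : ℝ, 0 < c → ∀ᶠ K : ℕ in atTop,
      (1 - F ((c * Real.log K / lam) ^ (γ⁻¹:ℝ)) ≤
        2*α*((c/lam) * Real.log K)^(γ⁻¹*β) * (K:ℝ)^(-c)) ∧
      ((1/2)*α*((c/lam) * Real.log K)^(γ⁻¹*β) * (K:ℝ)^(-c) ≤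
        1 - F ((c * Real.log K / lam) ^ (γ⁻¹:ℝ))) := by
    intro c hc
    have hx : Tendsto (fun K : ℕ => (c * Real.log K / lam) ^ (γ⁻¹:ℝ)) atTop atTop := by
      apply (tendsto_rpow_atTop (by positivity : (0:ℝ) < γ⁻¹)).comp
      apply Tendsto.congr (f₁ := fun K : ℕ => (c/lam) * Real.log K) (fun K => by ring)
      exact hlogK.const_mul_atTop (by positivity)
    filter_upwards [hx.eventually hratio, hlogK.eventually (eventually_gt_atTop 0),
      (eventually_gt_atTop 0 : ∀ᶠ K : ℕ in atTop, 0 < K)] with K hK hlg hK0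
    have hK0' : (0:ℝ) < K := by exact_mod_cast hK0
    set y : ℝ := c * Real.log K / lam with hy
    have hy0 : (0:ℝ) ≤ y := by positivity
    have hxg : ((y) ^ (γ⁻¹:ℝ)) ^ γ = y := by
      rw [← Real.rpow_mul hy0, inv_mul_cancel₀ hγ.ne', Real.rpow_one]
    have hyy : y = (c/lam) * Real.log K := by rw [hy]; ring
    have hxb : ((y) ^ (γ⁻¹:ℝ)) ^ β = ((c/lam) * Real.log K) ^ (γ⁻¹ * β) := by
      rw [← Real.rpow_mul hy0, hyy]
    have hexp : Real.exp (-lam * ((y) ^ (γ⁻¹:ℝ)) ^ γ) = (K:ℝ) ^ (-c) := by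
      rw [hxg, Real.rpow_def_of_pos hK0']
      congr 1
      rw [hy]
      field_simp
    obtain ⟨h1, h2⟩ := hK
    rw [hxb, hexp] at h1 h2
    constructor
    · calc 1 - F (y ^ (γ⁻¹:ℝ)) ≤ 2*(α * ((c/lam) * Real.log K) ^ (γ⁻¹*β) * (K:ℝ)^(-c)) := h1
        _ = 2*α*((c/lam) * Real.log K)^(γ⁻¹*β) * (K:ℝ)^(-c) := by ring
    · calc (1/2)*α*((c/lam) * Real.log K)^(γ⁻¹*β) * (K:ℝ)^(-c)
          = (1/2)*(α * ((c/lam) * Real.log K) ^ (γ⁻¹*β) * (K:ℝ)^(-c)) := by ring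
        _ ≤ 1 - F (y ^ (γ⁻¹:ℝ)) := h2
  constructor
  · have hpl := hKR.eventually (stmt8_polylog_le_rpow ((1+η)/lam) (γ⁻¹*β) (η/8)
      (by positivity) (by positivity))
    have hconst : ∀ᶠ K : ℕ in atTop, 2*α ≤ (K:ℝ)^(η/8:ℝ) :=
      hKR.eventually ((tendsto_rpow_atTop (by positivity : (0:ℝ) < η/8)).eventually_ge_atTop (2*α))
    filter_upwards [main (1+η) (by linarith), hpl, hconst,
      hKR.eventually (eventually_ge_atTop 1),
      (hlogK.eventually (eventually_gt_atTop 0))] with K hm hpl' hc' hK1 hlg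
    have hK0' : (0:ℝ) < K := by linarith
    have hP : (0:ℝ) < ((1+η)/lam * Real.log K) ^ (γ⁻¹*β) :=
      Real.rpow_pos_of_pos (by positivity) _
    have hKc : (0:ℝ) < (K:ℝ)^(-(1+η)) := Real.rpow_pos_of_pos hK0' _
    refine hm.1.trans ?_
    have step : 2*α*((1+η)/lam * Real.log K)^(γ⁻¹*β) * (K:ℝ)^(-(1+η)) ≤
        (K:ℝ)^(η/8:ℝ) * (K:ℝ)^(η/8:ℝ) * (K:ℝ)^(-(1+η)) := by
      have h2 : (0:ℝ) ≤ (K:ℝ)^(η/8:ℝ) := (Real.rpow_pos_of_pos hK0' _).le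
      have h3 := mul_le_mul hc' hpl' hP.le (by positivity)
      nlinarith
    refine step.trans ?_
    rw [← Real.rpow_add hK0', ← Real.rpow_add hK0']
    exact Real.rpow_le_rpow_of_exponent_le hK1 (by linarith)
  · have hpl := hKR.eventually (stmt8_rpow_neg_le_polylog ((1-η)/lam) (γ⁻¹*β) (η/8)
      (div_pos (by linarith) hlam) (by positivity))
    have hconst : ∀ᶠ K : ℕ in atTop, (K:ℝ)^(-(η/8):ℝ) ≤ (1/2)*α := by
      refine hKR.eventually ((tendsto_rpow_neg_atTop (by positivity : (0:ℝ) < η/8)).eventually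
        (eventually_le_nhds (by linarith)))
    filter_upwards [main (1-η) (by linarith), hpl, hconst,
      hKR.eventually (eventually_ge_atTop 1),
      (hlogK.eventually (eventually_gt_atTop 0))] with K hm hpl' hc' hK1 hlg
    have hK0' : (0:ℝ) < K := by linarith
    have hKc : (0:ℝ) < (K:ℝ)^(-(1-η)) := Real.rpow_pos_of_pos hK0' _
    refine le_trans ?_ hm.2
    have step : (K:ℝ)^(-(η/8):ℝ) * (K:ℝ)^(-(η/8):ℝ) * (K:ℝ)^(-(1-η)) ≤
        (1/2)*α*((1-η)/lam * Real.log K)^(γ⁻¹*β) * (K:ℝ)^(-(1-η)) := by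
      have h2 : (0:ℝ) ≤ (K:ℝ)^(-(η/8):ℝ) := (Real.rpow_pos_of_pos hK0' _).le
      have h3 := mul_le_mul hc' hpl' h2 (by positivity)
      nlinarith
    refine le_trans ?_ step
    rw [← Real.rpow_add hK0', ← Real.rpow_add hK0']
    exact Real.rpow_le_rpow_of_exponent_le hK1 (by linarith)

end AuxStmt8
set_option maxHeartbeats 2000000 in
/-- for identically distributed, `m`-dependent, unbounded random variables with
a common exponentially-dominated tail distribution, and integers `1 ≤ M_K ≤ K` with
`M_K → ∞` and `M_K / ln^μ K → 0` for some `0 < μ < 1`, the ratio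
`X_{(K-M_K+1)} / X_{(K)}` converges to `1` in probability. -/
theorem stmt_8 (m : ℕ)
    (Ω : ℕ → Type) (inst : ∀ K, MeasurableSpace (Ω K))
    (μ : ∀ K, Measure (Ω K)) (hprob : ∀ K, IsProbabilityMeasure (μ K))
    (X : ∀ K, Fin K → Ω K → ℝ)
    (hmeas : ∀ K k, Measurable (X K k))
    (F : ℝ → ℝ) (hFcont : Continuous F) (hFunb : ∀ x, F x < 1)
    (α β lam γ : ℝ) (hα : 0 < α) (hlam : 0 < lam) (hγ : 0 < γ)
    (htail : ExpDomTail F α β lam γ)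
    (hcdf : ∀ K (k : Fin K), cdfOf (μ K) (X K k) = F)
    (hmdep : ∀ K, MDepFam (μ K) m (X K))
    (M : ℕ → ℕ) (hM1 : ∀ K, 1 ≤ M K ∧ M K ≤ K)
    (hM2 : Tendsto (fun K => (M K : ℝ)) atTop atTop)
    (t : ℝ) (ht0 : 0 < t) (ht1 : t < 1)
    (hM3 : Tendsto (fun K : ℕ => (M K : ℝ) / (Real.log K) ^ t) atTop (nhds 0))
    (δ : ℝ) (hδ : 0 < δ) :
    Tendsto (fun K => μ K {ω |
        δ < |orderStat (fun k => X K k ω) (K - M K + 1) / orderStat (fun k => X K k ω) K - 1|})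
      atTop (nhds 0) := by
  classical
  have hKR : Tendsto (fun K : ℕ => (K:ℝ)) atTop atTop := tendsto_natCast_atTop_atTop
  have hlogK : Tendsto (fun K : ℕ => Real.log K) atTop atTop :=
    Real.tendsto_log_atTop.comp hKR
  -- choose η
  obtain ⟨η, hη0, hη1, hηδ⟩ :
      ∃ η : ℝ, 0 < η ∧ η < 1 ∧ 1 - ((1-η)/(1+η)) ^ (γ⁻¹:ℝ) < δ := by
    have h1 : ContinuousAt (fun s : ℝ => (1-s)/(1+s)) 0 :=
      ContinuousAt.div (by fun_prop) (by fun_prop) (by norm_num)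
    have hca : ContinuousAt (fun s : ℝ => ((1-s)/(1+s)) ^ (γ⁻¹:ℝ)) 0 :=
      ContinuousAt.rpow_const h1 (Or.inl (by norm_num))
    have hev : ∀ᶠ s : ℝ in nhds 0, 1 - δ < ((1-s)/(1+s)) ^ (γ⁻¹:ℝ) := by
      have h3 := hca.tendsto
      norm_num at h3
      exact h3.eventually (eventually_gt_nhds (by linarith))
    obtain ⟨ε, hε0, hε⟩ := Metric.eventually_nhds_iff.mp hev
    refine ⟨min (ε/2) (1/2), by positivity, ?_, ?_⟩
    · calc min (ε/2) (1/2) ≤ 1/2 := min_le_right _ _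
        _ < 1 := by norm_num
    · have hd : dist (min (ε/2) (1/2)) 0 < ε := by
        rw [Real.dist_eq, sub_zero, abs_of_pos (by positivity)]
        calc min (ε/2) (1/2) ≤ ε/2 := min_le_left _ _
          _ < ε := by linarith
      have := hε hd
      linarith
  obtain ⟨hup, hlow⟩ := stmt8_tail_bounds hα hlam hγ htail hη0 hη1
  -- basic facts about F
  have hF0 : ∀ x, 0 ≤ F x := by
    intro x
    have h1 := congrFun (hcdf 1 ⟨0, Nat.zero_lt_one⟩) x
    rw [cdfOf] at h1
    rw [← h1]
    exact ENNReal.toReal_nonneg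
  -- measure facts
  have hmeasle : ∀ K (k : Fin K) x, μ K {ω | X K k ω ≤ x} = ENNReal.ofReal (F x) := by
    intro K k x
    haveI := hprob K
    have h1 : (μ K {ω | X K k ω ≤ x}).toReal = F x := congrFun (hcdf K k) x
    rw [← h1, ENNReal.ofReal_toReal (measure_ne_top _ _)]
  have hmeasgt : ∀ K (k : Fin K) x, μ K {ω | x < X K k ω} = ENNReal.ofReal (1 - F x) := by
    intro K k x
    haveI := hprob K
    have hms : MeasurableSet {ω | X K k ω ≤ x} := hmeas K k measurableSet_Iic
    have hcompl : {ω | x < X K k ω} = {ω | X K k ω ≤ x}ᶜ := by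
      ext ω; simp [not_le]
    rw [hcompl, measure_compl hms (measure_ne_top _ _), hmeasle K k x, measure_univ,
      ENNReal.ofReal_sub 1 (hF0 x), ENNReal.ofReal_one]
  -- counting quantities
  set NN : ℕ → ℕ := fun K => K / (m+1) with hNNdef
  set Q : ℕ → ℕ := fun K => NN K / M K with hQdef
  have hMle : ∀ᶠ K : ℕ in atTop, (M K : ℝ) ≤ (Real.log K)^t := by
    filter_upwards [hM3.eventually (eventually_lt_nhds one_pos),
      hlogK.eventually (eventually_ge_atTop 1)] with K h1 h2
    have hL : (0:ℝ) < (Real.log K)^t := Real.rpow_pos_of_pos (by linarith) t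
    rw [div_lt_one hL] at h1
    linarith
  have hvi : ∀ᶠ K : ℕ in atTop,
      ((m:ℝ)+1) * (Real.log K)^t * ((K:ℝ)^(η/4:ℝ) + 2) ≤ (K:ℝ)^(η/2:ℝ) := by
    have hplt := hKR.eventually (stmt8_polylog_le_rpow 1 t (η/16) one_pos (by linarith))
    have hm' := hKR.eventually
      ((tendsto_rpow_atTop (by linarith : (0:ℝ) < η/16)).eventually_ge_atTop ((m:ℝ)+1))
    have h2' := hKR.eventually
      ((tendsto_rpow_atTop (by linarith : (0:ℝ) < η/16)).eventually_ge_atTop 2)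
    have h5' := hKR.eventually
      ((tendsto_rpow_atTop (by linarith : (0:ℝ) < η/4)).eventually_ge_atTop 2)
    filter_upwards [hplt, hm', h2', h5', hKR.eventually (eventually_ge_atTop 1)]
      with K h1 h2 h3 h5 h4
    have hk0 : (0:ℝ) < K := by linarith
    have hL : (Real.log K)^t ≤ (K:ℝ)^(η/16:ℝ) := by simpa using h1
    have e16 : (0:ℝ) < (K:ℝ)^(η/16:ℝ) := Real.rpow_pos_of_pos hk0 _
    have e4 : (0:ℝ) < (K:ℝ)^(η/4:ℝ) := Real.rpow_pos_of_pos hk0 _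
    have hLpos : (0:ℝ) ≤ (Real.log K)^t := Real.rpow_nonneg (Real.log_nonneg h4) t
    have hmul : ((m:ℝ)+1) * (Real.log K)^t * ((K:ℝ)^(η/4:ℝ) + 2) ≤
        ((K:ℝ)^(η/16:ℝ) * (K:ℝ)^(η/16:ℝ)) * ((K:ℝ)^(η/16:ℝ) * (K:ℝ)^(η/4:ℝ)) := by
      have hA2 : (K:ℝ)^(η/4:ℝ) + 2 ≤ (K:ℝ)^(η/16:ℝ) * (K:ℝ)^(η/4:ℝ) := by nlinarith
      have hstep : ((m:ℝ)+1) * (Real.log K)^t ≤ (K:ℝ)^(η/16:ℝ) * (K:ℝ)^(η/16:ℝ) := by nlinarith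
      nlinarith
    refine hmul.trans ?_
    rw [← Real.rpow_add hk0, ← Real.rpow_add hk0, ← Real.rpow_add hk0]
    exact Real.rpow_le_rpow_of_exponent_le h4 (by linarith)
  have hqev : ∀ᶠ K : ℕ in atTop, (K:ℝ)^(η/4:ℝ) ≤ (Q K : ℝ) * (K:ℝ)^(η/2 - 1) := by
    filter_upwards [hMle, hvi, hlogK.eventually (eventually_ge_atTop 1),
      eventually_ge_atTop (m+1), eventually_ge_atTop 1] with K h1 h2 hlg hKm hK1
    have hk0 : (0:ℝ) < K := by
      have : (1:ℝ) ≤ (K:ℝ) := by exact_mod_cast hK1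
      linarith
    have hk1 : (1:ℝ) ≤ (K:ℝ) := by exact_mod_cast hK1
    set k : ℝ := (K:ℝ) with hkdef
    set L : ℝ := (Real.log K)^t with hLdef
    set A : ℝ := k^(η/4:ℝ) with hAdef
    set B : ℝ := k^(η/2-1:ℝ) with hBdef
    have hL1 : (1:ℝ) ≤ L := Real.one_le_rpow hlg (le_of_lt ht0)
    have hM1' : (1:ℝ) ≤ (M K:ℝ) := by exact_mod_cast (hM1 K).1
    have hMpos : (0:ℝ) < (M K:ℝ) := by linarith
    have hB1 : B ≤ 1 := Real.rpow_le_one_of_one_le_of_nonpos hk1 (by linarith)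
    have hB0 : (0:ℝ) < B := Real.rpow_pos_of_pos hk0 _
    have hA0 : (0:ℝ) < A := Real.rpow_pos_of_pos hk0 _
    have hC : k * B = k^(η/2:ℝ) := by
      rw [show (η/2:ℝ) = 1 + (η/2 - 1) by ring, Real.rpow_add hk0, Real.rpow_one]
    rw [← hC] at h2
    have hN := stmt8_natDiv_real_lb K (m+1) (Nat.succ_pos m)
    have hQ := stmt8_natDiv_real_lb (NN K) (M K) (hM1 K).1
    push_cast at hN
    have hNM : k - ((m:ℝ)+1) ≤ (NN K:ℝ)*((m:ℝ)+1) := by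
      have hmp : (0:ℝ) < (m:ℝ)+1 := by positivity
      rw [sub_le_iff_le_add, div_le_iff₀ hmp] at hN
      nlinarith
    have hQM : (NN K : ℝ) - (M K:ℝ) ≤ (Q K:ℝ) * (M K:ℝ) := by
      rw [sub_le_iff_le_add, div_le_iff₀ hMpos] at hQ
      nlinarith
    have f1 : ((NN K:ℝ) - (M K:ℝ)) * (B*((m:ℝ)+1)) ≤ ((Q K:ℝ) * (M K:ℝ)) * (B*((m:ℝ)+1)) :=
      mul_le_mul_of_nonneg_right hQM (by positivity)
    have f2 : (k - ((m:ℝ)+1)) * B ≤ ((NN K:ℝ)*((m:ℝ)+1)) * B :=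
      mul_le_mul_of_nonneg_right hNM hB0.le
    have f4 : ((m:ℝ)+1) * ((M K:ℝ)*(A+2)) ≤ k*B := by
      refine le_trans ?_ h2
      have h3a := mul_le_mul_of_nonneg_right h1 (show (0:ℝ) ≤ A+2 by linarith)
      have h3b := mul_le_mul_of_nonneg_left h3a (show (0:ℝ) ≤ (m:ℝ)+1 by positivity)
      linarith [h3b]
    have goalM : A * ((M K:ℝ)*((m:ℝ)+1)) ≤ ((Q K:ℝ)*B) * ((M K:ℝ)*((m:ℝ)+1)) := by
      nlinarith [f1, f2, f4,
        mul_nonneg (show (0:ℝ) ≤ (M K:ℝ) by linarith) (show (0:ℝ) ≤ 1 - B by linarith)]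
    exact le_of_mul_le_mul_right goalM (by positivity)
  -- the key eventual measure bound
  have key : ∀ᶠ K : ℕ in atTop, μ K {ω |
        δ < |orderStat (fun k => X K k ω) (K - M K + 1) / orderStat (fun k => X K k ω) K - 1|}
      ≤ ENNReal.ofReal ((K:ℝ)^(-(η/2)) + (K:ℝ) * Real.exp (-(K:ℝ)^(η/4:ℝ))) := by
    filter_upwards [hup, hlow, hqev, hlogK.eventually (eventually_ge_atTop 1),
      eventually_ge_atTop 1] with K hupK hlowK hqK hlg hK1
    haveI := hprob K
    set xp := ((1+η) * Real.log K / lam) ^ (γ⁻¹:ℝ) with hxpdef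
    set xm := ((1-η) * Real.log K / lam) ^ (γ⁻¹:ℝ) with hxmdef
    have hk1 : (1:ℝ) ≤ (K:ℝ) := by exact_mod_cast hK1
    have hk0 : (0:ℝ) < K := by linarith
    have hlg0 : (0:ℝ) < Real.log K := by linarith
    have hxm0 : 0 < xm := Real.rpow_pos_of_pos (div_pos (mul_pos (by linarith) hlg0) hlam) _
    have hxp0 : 0 < xp := Real.rpow_pos_of_pos (div_pos (mul_pos (by linarith) hlg0) hlam) _
    have hMK := hM1 K
    have hratio : xm / xp = ((1-η)/(1+η)) ^ (γ⁻¹:ℝ) := by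
      have hbase : ((1-η) * Real.log K / lam) / ((1+η) * Real.log K / lam) = (1-η)/(1+η) := by
        have h1 : lam ≠ 0 := hlam.ne'
        have h2 : Real.log (K:ℝ) ≠ 0 := hlg0.ne'
        have h3 : (1:ℝ) + η ≠ 0 := by linarith
        field_simp
      rw [hxmdef, hxpdef, ← Real.div_rpow (le_of_lt (div_pos (mul_pos (by linarith) hlg0) hlam))
        (le_of_lt (div_pos (mul_pos (by linarith) hlg0) hlam)), hbase]
    set Bad1 : Set (Ω K) := {ω | xp < orderStat (fun k => X K k ω) K} with hBad1def
    set Bad2 : Set (Ω K) := {ω | orderStat (fun k => X K k ω) (K - M K + 1) ≤ xm} with hBad2def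
    have hsub : {ω | δ < |orderStat (fun k => X K k ω) (K - M K + 1) /
        orderStat (fun k => X K k ω) K - 1|} ⊆ Bad1 ∪ Bad2 := by
      intro ω hω
      by_contra hc
      simp only [Set.mem_union, hBad1def, hBad2def, Set.mem_setOf_eq, not_or, not_lt,
        not_le] at hc
      obtain ⟨hc1, hc2⟩ := hc
      simp only [Set.mem_setOf_eq] at hω
      have hmono : orderStat (fun k => X K k ω) (K - M K + 1) ≤
          orderStat (fun k => X K k ω) K :=
        stmt8_orderStat_mono _ (by omega) (by omega) le_rfl
      have hosK0 : 0 < orderStat (fun k => X K k ω) K := lt_of_le_of_lt hxm0.le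
        (lt_of_lt_of_le hc2 hmono)
      have hr1 : orderStat (fun k => X K k ω) (K - M K + 1) /
          orderStat (fun k => X K k ω) K ≤ 1 := (div_le_one hosK0).2 hmono
      have hr2 : xm / xp ≤ orderStat (fun k => X K k ω) (K - M K + 1) /
          orderStat (fun k => X K k ω) K := by
        rw [div_le_div_iff₀ hxp0 hosK0]
        calc xm * orderStat (fun k => X K k ω) K
            ≤ orderStat (fun k => X K k ω) (K - M K + 1) * orderStat (fun k => X K k ω) K :=
              mul_le_mul_of_nonneg_right hc2.le hosK0.le
          _ ≤ orderStat (fun k => X K k ω) (K - M K + 1) * xp :=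
              mul_le_mul_of_nonneg_left hc1 (le_of_lt (lt_of_le_of_lt hxm0.le hc2))
      have habs : |orderStat (fun k => X K k ω) (K - M K + 1) /
          orderStat (fun k => X K k ω) K - 1| ≤ 1 - xm / xp := by
        rw [abs_of_nonpos (by linarith)]
        linarith
      rw [hratio] at habs
      linarith
    refine le_trans (measure_mono hsub) (le_trans (measure_union_le _ _) ?_)
    have hBad1le : μ K Bad1 ≤ ENNReal.ofReal ((K:ℝ)^(-(η/2))) := by
      have hsub1 : Bad1 ⊆ ⋃ k : Fin K, {ω | xp < X K k ω} := by
        intro ω hω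
        obtain ⟨k, hk⟩ := stmt8_orderStat_exists_eq (fun k => X K k ω) K le_rfl hK1
        refine Set.mem_iUnion.2 ⟨k, ?_⟩
        rw [Set.mem_setOf_eq, ← hk]
        exact hω
      refine le_trans (measure_mono hsub1) (le_trans (measure_iUnion_le _) ?_)
      rw [tsum_fintype]
      rw [Finset.sum_congr rfl (fun k _ => hmeasgt K k xp), Finset.sum_const,
        Finset.card_univ, Fintype.card_fin, nsmul_eq_mul]
      have h1 : ENNReal.ofReal (1 - F xp) ≤ ENNReal.ofReal ((K:ℝ)^(-(1+η/2))) :=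
        ENNReal.ofReal_le_ofReal hupK
      calc (K:ENNReal) * ENNReal.ofReal (1 - F xp)
          ≤ (K:ENNReal) * ENNReal.ofReal ((K:ℝ)^(-(1+η/2))) := mul_le_mul_right h1 _
        _ = ENNReal.ofReal ((K:ℝ) * (K:ℝ)^(-(1+η/2))) := by
            rw [← ENNReal.ofReal_natCast K, ← ENNReal.ofReal_mul (by positivity)]
        _ = ENNReal.ofReal ((K:ℝ)^(-(η/2))) := by
            congr 1
            rw [show (K:ℝ) * (K:ℝ)^(-(1+η/2)) = (K:ℝ)^(1:ℝ) * (K:ℝ)^(-(1+η/2)) by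
              rw [Real.rpow_one], ← Real.rpow_add hk0]
            congr 1
            ring
    have hBad2le : μ K Bad2 ≤ ENNReal.ofReal ((K:ℝ) * Real.exp (-(K:ℝ)^(η/4:ℝ))) := by
      have hQ1 : 1 ≤ Q K := by
        by_contra hq
        have hq0 : Q K = 0 := by omega
        rw [hq0] at hqK
        norm_num at hqK
        exact absurd hqK (not_le.2 (Real.rpow_pos_of_pos hk0 _))
      have hMq : M K * Q K ≤ NN K := by
        calc M K * Q K = Q K * M K := Nat.mul_comm _ _
          _ ≤ NN K := Nat.div_mul_le_self _ _
      have hNm : NN K * (m+1) ≤ K := Nat.div_mul_le_self _ _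
      have hblk : ∀ b i : ℕ, b < M K → i < Q K → (b * Q K + i) * (m+1) < K := by
        intro b i hb hi
        have h1 : b * Q K + i < M K * Q K := by
          have h2 : (b+1) * Q K ≤ M K * Q K := Nat.mul_le_mul_right _ (by omega)
          have h3 : b * Q K + i < (b+1) * Q K := by
            rw [Nat.add_mul, Nat.one_mul]
            omega
          omega
        have h2 : b * Q K + i < NN K := lt_of_lt_of_le h1 hMq
        calc (b * Q K + i) * (m+1) < NN K * (m+1) := (Nat.mul_lt_mul_right (Nat.succ_pos m)).mpr h2
          _ ≤ K := hNm
      have hK0 : 0 < K := hK1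
      set S : ℕ → Finset (Fin K) := fun b => (Finset.range (Q K)).image
        (fun i => (⟨(b * Q K + i) * (m+1) % K, Nat.mod_lt _ hK0⟩ : Fin K)) with hSdef
      have hSmem : ∀ b, b < M K → ∀ kk : Fin K,
          kk ∈ S b ↔ ∃ i, i < Q K ∧ (kk:ℕ) = (b * Q K + i) * (m+1) := by
        intro b hb kk
        rw [hSdef]
        simp only [Finset.mem_image, Finset.mem_range]
        constructor
        · rintro ⟨i, hi, rfl⟩
          exact ⟨i, hi, by simp [Nat.mod_eq_of_lt (hblk b i hb hi)]⟩
        · rintro ⟨i, hi, hval⟩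
          refine ⟨i, hi, ?_⟩
          apply Fin.ext
          simp [Nat.mod_eq_of_lt (hblk b i hb hi), hval]
      have hScard : ∀ b, b < M K → (S b).card = Q K := by
        intro b hb
        rw [hSdef]
        rw [Finset.card_image_of_injOn, Finset.card_range]
        intro i hi i' hi' he
        simp only [Finset.coe_range, Set.mem_Iio] at hi hi'
        have hv := congrArg Fin.val he
        simp only [Nat.mod_eq_of_lt (hblk b _ hb hi), Nat.mod_eq_of_lt (hblk b _ hb hi')] at hv
        have h3 : b * Q K + i = b * Q K + i' := Nat.eq_of_mul_eq_mul_right (Nat.succ_pos m) hv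
        omega
      have hprodb : ∀ b, b < M K →
          μ K (⋂ kk ∈ S b, {ω | X K kk ω ≤ xm}) = ENNReal.ofReal (F xm) ^ (Q K) := by
        intro b hb
        have hgap : ∀ i ∈ S b, ∀ j ∈ S b, i ≠ j → (m : ℤ) < |(i : ℤ) - (j : ℤ)| := by
          intro i hi j hj hne
          obtain ⟨a, ha, hav⟩ := (hSmem b hb i).1 hi
          obtain ⟨a', ha', hav'⟩ := (hSmem b hb j).1 hj
          have hne' : (b * Q K + a : ℤ) ≠ (b * Q K + a' : ℤ) := by
            intro hco
            apply hne
            apply Fin.ext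
            rw [hav, hav']
            have : (b * Q K + a : ℕ) = (b * Q K + a' : ℕ) := by exact_mod_cast hco
            rw [this]
          have hiv : ((i : ℤ)) = ((b * Q K + a : ℕ) : ℤ) * ((m:ℤ)+1) := by
            have := congrArg (fun n : ℕ => (n : ℤ)) hav
            push_cast at this ⊢
            linarith
          have hjv : ((j : ℤ)) = ((b * Q K + a' : ℕ) : ℤ) * ((m:ℤ)+1) := by
            have := congrArg (fun n : ℕ => (n : ℤ)) hav'
            push_cast at this ⊢
            linarith
          have habs1 : 1 ≤ |((b * Q K + a : ℕ) : ℤ) - ((b * Q K + a' : ℕ) : ℤ)| := by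
            apply Int.one_le_abs
            rw [sub_ne_zero]
            push_cast
            push_cast at hne'
            exact hne'
          calc (m:ℤ) < (m:ℤ)+1 := by omega
            _ ≤ |((b * Q K + a : ℕ) : ℤ) - ((b * Q K + a' : ℕ) : ℤ)| * ((m:ℤ)+1) := by
                nlinarith
            _ = |(i:ℤ) - (j:ℤ)| := by
                rw [hiv, hjv, ← sub_mul, abs_mul,
                  abs_of_nonneg (show (0:ℤ) ≤ (m:ℤ)+1 by positivity)]
        have hind := hmdep K (S b) hgap
        have hmi := (ProbabilityTheory.iIndepFun_iff_measure_inter_preimage_eq_mul.mp hind)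
          (Finset.univ) (sets := fun _ => Set.Iic xm) (fun i _ => measurableSet_Iic)
        have hset : (⋂ i ∈ (Finset.univ : Finset (S b)), (X K (i : (S b)).1) ⁻¹' Set.Iic xm)
            = ⋂ kk ∈ S b, {ω | X K kk ω ≤ xm} := by
          ext ω
          simp only [Set.mem_iInter, Set.mem_preimage, Set.mem_Iic, Finset.mem_univ,
            Set.mem_setOf_eq, forall_const]
          constructor
          · intro h kk hkk
            exact h ⟨kk, hkk⟩
          · intro h i
            exact h i.1 i.2
        rw [hset] at hmi
        rw [hmi]
        have heach : ∀ i : (S b), μ K ((X K (i : (S b)).1) ⁻¹' Set.Iic xm) =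
            ENNReal.ofReal (F xm) := by
          intro i
          exact hmeasle K i.1 xm
        rw [Finset.prod_congr rfl (fun i _ => heach i), Finset.prod_const, Finset.card_univ,
          Fintype.card_coe, hScard b hb]
      have hsub2 : Bad2 ⊆ ⋃ b ∈ Finset.range (M K), ⋂ kk ∈ S b, {ω | X K kk ω ≤ xm} := by
        intro ω hω
        by_contra hc
        simp only [Set.mem_iUnion, Set.mem_iInter, Set.mem_setOf_eq, not_exists,
          not_forall] at hc
        have hch : ∀ b ∈ Finset.range (M K), ∃ kk, kk ∈ S b ∧ ¬ (X K kk ω ≤ xm) := by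
          intro b hb
          obtain ⟨kk, hkk, hkk2⟩ := hc b hb
          exact ⟨kk, hkk, hkk2⟩
        have hcard1 : K - M K + 1 ≤ (Finset.univ.filter (fun kk => X K kk ω ≤ xm)).card := by
          apply stmt8_le_card_of_orderStat_le _ (by omega) (by omega)
          simpa [hBad2def] using hω
        have hcard2 : M K ≤ (Finset.univ.filter (fun kk => ¬ (X K kk ω ≤ xm))).card := by
          have hchA : ∀ b : {x // x ∈ Finset.range (M K)}, ∃ kk, kk ∈ S b.1 ∧
              ¬ (X K kk ω ≤ xm) := fun b => hch b.1 b.2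
          choose f hf1 hf2 using hchA
          calc M K = (Finset.range (M K)).attach.card := by
                rw [Finset.card_attach, Finset.card_range]
            _ ≤ (Finset.univ.filter (fun kk => ¬ (X K kk ω ≤ xm))).card := by
                apply Finset.card_le_card_of_injOn f
                · intro b _
                  simp only [Finset.mem_coe, Finset.mem_filter, Finset.mem_univ, true_and]
                  exact hf2 b
                · intro b _ b' _ he
                  have hb := b.2
                  have hb' := b'.2
                  rw [Finset.mem_range] at hb hb'
                  obtain ⟨i, hi, hv⟩ := (hSmem b.1 hb (f b)).1 (hf1 b)
                  obtain ⟨i', hi', hv'⟩ := (hSmem b'.1 hb' (f b')).1 (hf1 b')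
                  have hvv : (b.1 * Q K + i) * (m+1) = (b'.1 * Q K + i') * (m+1) := by
                    rw [← hv, ← hv', he]
                  have h3 := Nat.eq_of_mul_eq_mul_right (Nat.succ_pos m) hvv
                  have h4 := stmt8_block_inj hi hi' h3
                  exact Subtype.ext h4.1
        have hsplit := Finset.card_filter_add_card_filter_not
          (s := (Finset.univ : Finset (Fin K))) (p := fun kk => X K kk ω ≤ xm)
        rw [Finset.card_univ, Fintype.card_fin] at hsplit
        omega
      calc μ K Bad2 ≤ ∑ b ∈ Finset.range (M K), μ K (⋂ kk ∈ S b, {ω | X K kk ω ≤ xm}) :=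
            (measure_mono hsub2).trans (measure_biUnion_finset_le _ _)
        _ = ∑ _b ∈ Finset.range (M K), ENNReal.ofReal (F xm) ^ (Q K) :=
            Finset.sum_congr rfl (fun b hb => hprodb b (Finset.mem_range.1 hb))
        _ = (M K) * ENNReal.ofReal (F xm) ^ (Q K) := by
            rw [Finset.sum_const, Finset.card_range, nsmul_eq_mul]
        _ ≤ (K:ENNReal) * ENNReal.ofReal (Real.exp (-(K:ℝ)^(η/4:ℝ))) := by
            refine mul_le_mul' (by exact_mod_cast Nat.cast_le.2 hMK.2) ?_
            rw [← ENNReal.ofReal_pow (hF0 xm)]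
            apply ENNReal.ofReal_le_ofReal
            have hp : (K:ℝ)^(η/2-1:ℝ) ≤ 1 - F xm := hlowK
            have hFxm1 : F xm ≤ Real.exp (-(1 - F xm)) := by
              have h5 := Real.add_one_le_exp (-(1 - F xm))
              linarith
            have h1 : F xm ^ Q K ≤ Real.exp (-(1 - F xm)) ^ Q K :=
              pow_le_pow_left₀ (hF0 xm) hFxm1 _
            refine h1.trans ?_
            rw [← Real.exp_nat_mul]
            apply Real.exp_le_exp.2
            have h2 : (K:ℝ)^(η/4:ℝ) ≤ (Q K:ℝ) * (1 - F xm) := by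
              refine hqK.trans ?_
              exact mul_le_mul_of_nonneg_left hp (by positivity)
            nlinarith [h2]
        _ = ENNReal.ofReal ((K:ℝ) * Real.exp (-(K:ℝ)^(η/4:ℝ))) := by
            rw [← ENNReal.ofReal_natCast K, ← ENNReal.ofReal_mul (by positivity)]
    calc μ K Bad1 + μ K Bad2
        ≤ ENNReal.ofReal ((K:ℝ)^(-(η/2))) + ENNReal.ofReal ((K:ℝ) * Real.exp (-(K:ℝ)^(η/4:ℝ))) :=
          add_le_add hBad1le hBad2le
      _ = ENNReal.ofReal ((K:ℝ)^(-(η/2)) + (K:ℝ) * Real.exp (-(K:ℝ)^(η/4:ℝ))) :=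
          (ENNReal.ofReal_add (by positivity) (by positivity)).symm
  -- conclude by squeezing
  have hB := stmt8_tendsto_B (η/2) (η/4) (by linarith) (by linarith)
  have hBtend : Tendsto (fun K : ℕ =>
      ENNReal.ofReal ((K:ℝ)^(-(η/2)) + (K:ℝ) * Real.exp (-(K:ℝ)^(η/4:ℝ)))) atTop (nhds 0) := by
    have h1 := ENNReal.tendsto_ofReal hB
    simpa using h1
  exact tendsto_of_tendsto_of_tendsto_of_le_of_le' tendsto_const_nhds hBtend
    (Eventually.of_forall (fun K => zero_le)) key
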